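/- Fix η, γ ∈ ℝ and define g(z) = z / ((1 + z e^{i(η+γ)})(1 + z e^{-i(η-γ)})) on the open unit disc 𝔻. Then g is starlike on 𝔻, i.e., g is injective on 𝔻, g(0) = 0, g'(0) = 1, and Re(z g'(z)/g(z)) > 0 for all nonzero z ∈ 𝔻. -/

import Mathlib

open Metric Complex

lemma re_one_div_gt_half (w : ℂ) (hw : ‖w‖ < 1) : (1 / (1 + w)).re > 1/2 := by
  have hne : (1 : ℂ) + w ≠ 0 := by
    intro h
    have : ‖w‖ = 1 := by
      have : w = -1 := by linear_combination h
      simp [this]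
    linarith
  have hns : 0 < Complex.normSq (1 + w) := Complex.normSq_pos.mpr hne
  have hsq : Complex.normSq w < 1 := by
    have : Complex.normSq w = ‖w‖ ^ 2 := by
      rw [Complex.normSq_eq_norm_sq]
    nlinarith [norm_nonneg w]
  rw [Complex.div_re]
  simp only [Complex.one_re, Complex.one_im, Complex.add_re, Complex.add_im]
  rw [gt_iff_lt, show (1:ℝ)/2 = 2⁻¹ by norm_num]
  rw [Complex.normSq_apply] at hsq ⊢
  simp only [Complex.add_re, Complex.add_im, Complex.one_re, Complex.one_im]
  rw [← add_div, lt_div_iff₀ (by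
    rw [Complex.normSq_apply] at hns
    simpa using hns)]
  nlinarith [hsq]

open Metric Complex in
theorem stmt_10 (η γ : ℝ)
    (g : ℂ → ℂ)
    (hg : ∀ z, g z = z / ((1 + z * Complex.exp ((η + γ) * Complex.I)) *
      (1 + z * Complex.exp (-(η - γ) * Complex.I)))) :
    Set.InjOn g (ball (0 : ℂ) 1) ∧ g 0 = 0 ∧ deriv g 0 = 1 ∧
      ∀ z ∈ ball (0 : ℂ) 1, z ≠ 0 → (z * deriv g z / g z).re > 0 := by
  set A := Complex.exp ((η + γ) * Complex.I) with hA
  set B := Complex.exp (-(η - γ) * Complex.I) with hB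
  have hnA : ‖A‖ = 1 := by
    rw [hA, Complex.norm_exp]
    norm_num [Complex.mul_re, Complex.I_re, Complex.I_im]
  have hnB : ‖B‖ = 1 := by
    rw [hB, Complex.norm_exp]
    norm_num [Complex.mul_re, Complex.I_re, Complex.I_im]
  have hgfun : g = fun z => z / ((1 + z * A) * (1 + z * B)) := funext hg
  -- nonvanishing of the factors
  have hne : ∀ (c z : ℂ), ‖c‖ = 1 → ‖z‖ < 1 → (1 : ℂ) + z * c ≠ 0 := by
    intro c z hc hz h
    have : ‖z * c‖ = 1 := by
      have : z * c = -1 := by linear_combination h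
      simp [this]
    rw [norm_mul, hc, mul_one] at this
    linarith
  -- derivative formula on the ball
  have hder : ∀ z : ℂ, ‖z‖ < 1 →
      HasDerivAt g ((1 - A * B * z ^ 2) / ((1 + z * A) * (1 + z * B)) ^ 2) z := by
    intro z hz
    have h1 := hne A z hnA hz
    have h2 := hne B z hnB hz
    have hD : HasDerivAt (fun z : ℂ => (1 + z * A) * (1 + z * B))
        (A * (1 + z * B) + (1 + z * A) * B) z := by
      have := (((hasDerivAt_id z).mul_const A).const_add 1).mul
        (((hasDerivAt_id z).mul_const B).const_add 1)
      simp only [id_eq, one_mul] at this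
      exact this
    have h := (hasDerivAt_id z).div hD (mul_ne_zero h1 h2)
    rw [hgfun]
    refine h.congr_deriv ?_
    simp only [id_eq]
    ring
  refine ⟨?_, ?_, ?_, ?_⟩
  · -- injectivity
    intro z hz w hw h
    rw [mem_ball, dist_zero_right] at hz hw
    rw [hg z, hg w] at h
    have h1 := hne A z hnA hz
    have h2 := hne B z hnB hz
    have h3 := hne A w hnA hw
    have h4 := hne B w hnB hw
    have key : (z - w) * (1 - A * B * (z * w)) = 0 := by
      rw [div_eq_div_iff (mul_ne_zero h1 h2) (mul_ne_zero h3 h4)] at h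
      linear_combination h
    have hne2 : (1 : ℂ) - A * B * (z * w) ≠ 0 := by
      intro h0
      have : ‖A * B * (z * w)‖ = 1 := by
        have : A * B * (z * w) = 1 := by linear_combination -h0
        simp [this]
      rw [norm_mul, norm_mul, hnA, hnB] at this
      simp only [norm_mul, one_mul] at this
      nlinarith [norm_nonneg z, norm_nonneg w]
    have := mul_eq_zero.mp key
    rcases this with h' | h'
    · exact sub_eq_zero.mp h'
    · exact absurd h' hne2
  · rw [hg]; simp
  · have h := (hder 0 (by simp)).deriv
    rw [h]; norm_num
  · intro z hz hz0
    rw [mem_ball, dist_zero_right] at hz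
    have h1 := hne A z hnA hz
    have h2 := hne B z hnB hz
    have hd := (hder z hz).deriv
    have hval : z * deriv g z / g z = 1 / (1 + z * A) + 1 / (1 + z * B) - 1 := by
      rw [hd, hg z]
      field_simp
      ring
    rw [hval]
    have hA' : ‖z * A‖ < 1 := by rw [norm_mul, hnA, mul_one]; exact hz
    have hB' : ‖z * B‖ < 1 := by rw [norm_mul, hnB, mul_one]; exact hz
    have rA := re_one_div_gt_half (z * A) hA'
    have rB := re_one_div_gt_half (z * B) hB'
    simp only [Complex.sub_re, Complex.add_re, Complex.one_re]
    linarith
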